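/- (Second moment of the averaged L-SVRG estimator.) For i = 1, …, n and l = 1, …, m let f_{il} : ℝ^d → ℝ be convex and differentiable with L_{il}-Lipschitz gradient; set f_i = (1/m) Σ_{l=1}^m f_{il}, f = (1/n) Σ_{i=1}^n f_i, and 𝓛 = 4 max_{i,l} L_{il}. Assume ∇f is L-Lipschitz and x* is a global minimizer of f (so ∇f(x*) = 0). Then for all x, w_1, …, w_n ∈ ℝ^d: ‖∇f(x)‖² + (1/n²) Σ_{i=1}^n (1/m) Σ_{l=1}^m ‖(∇f_{il}(x) − ∇f_{il}(w_i)) − (∇f_i(x) − ∇f_i(w_i))‖² ≤ (2L + 𝓛/n)(f(x) − f(x*)) + (2/n) σ₁, where σ₁ = (1/(mn)) Σ_{i=1}^n Σ_{l=1}^m ‖∇f_{il}(w_i) − ∇f_{il}(x*)‖². (The left-hand side equals the expected squared norm of the averaged L-SVRG gradient estimator with independent uniformly random component indices on each worker.) -/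

import Mathlib

open Finset

section Helpers

open InnerProductSpace

variable {E : Type*} [NormedAddCommGroup E] [InnerProductSpace ℝ E] [CompleteSpace E]

local notation "⟪" x ", " y "⟫" => @inner ℝ _ _ x y

private lemma dir_hasDerivAt' {g : E → ℝ} (hg : Differentiable ℝ g) (x v : E) (t : ℝ) :
    HasDerivAt (fun s : ℝ => g (x + s • v)) ⟪gradient g (x + t • v), v⟫ t := by
  have h1 : HasFDerivAt g (toDual ℝ E (gradient g (x + t • v))) (x + t • v) :=
    hasGradientAt_iff_hasFDerivAt.1 (hg _).hasGradientAt
  have h2 : HasDerivAt (fun s : ℝ => x + s • v) v t := by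
    simpa using ((hasDerivAt_id t).smul_const v).const_add x
  have h3 := h1.comp_hasDerivAt t h2
  simp at h3 ⊢
  exact h3

private lemma convex_lb' {g : E → ℝ} (hconv : ConvexOn ℝ Set.univ g) (hg : Differentiable ℝ g)
    (x y : E) : g x + ⟪gradient g x, y - x⟫ ≤ g y := by
  set v := y - x with hv
  set h : ℝ → ℝ := fun s => g (x + s • v) with hh
  have hconvh : ConvexOn ℝ Set.univ h := by
    have := hconv.comp_affineMap
      (AffineMap.const ℝ ℝ x +ᵥ (LinearMap.toAffineMap (LinearMap.toSpanSingleton ℝ E v)))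
    simp [Function.comp, hh, LinearMap.toSpanSingleton, AffineMap.vadd_apply,
      add_comm] at this
    exact this
  have hd : ∀ t : ℝ, HasDerivAt h ⟪gradient g (x + t • v), v⟫ t := fun t =>
    dir_hasDerivAt' hg x v t
  have h0 : deriv h 0 ≤ slope h 0 1 :=
    hconvh.deriv_le_slope (Set.mem_univ _) (Set.mem_univ _) zero_lt_one
      (hd 0).differentiableAt
  rw [(hd 0).deriv] at h0
  have : slope h 0 1 = g y - g x := by
    simp [slope, hh, hv]
  rw [this] at h0
  simp only [zero_smul, add_zero] at h0
  linarith

private lemma descent_lemma' {g : E → ℝ} {L : NNReal} (hg : Differentiable ℝ g)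
    (hlip : LipschitzWith L (fun x => gradient g x)) (x y : E) :
    g y ≤ g x + ⟪gradient g x, y - x⟫ + (L : ℝ) / 2 * ‖y - x‖ ^ 2 := by
  set v := y - x with hv
  have contg : Continuous (fun z : E => gradient g z) := hlip.continuous
  set D : ℝ → ℝ := fun t => ⟪gradient g (x + t • v), v⟫ - ⟪gradient g x, v⟫ with hD
  have hcont : Continuous D := by
    rw [hD]
    exact (contg.comp (continuous_const.add (continuous_id.smul continuous_const))).inner
      continuous_const |>.sub continuous_const
  have hH : ∀ t ∈ Set.uIcc (0:ℝ) 1,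
      HasDerivAt (fun s : ℝ => g (x + s • v) - s * ⟪gradient g x, v⟫) (D t) t := by
    intro t _
    exact (dir_hasDerivAt' hg x v t).sub (by simpa using (hasDerivAt_id t).mul_const _)
  have hint := intervalIntegral.integral_eq_sub_of_hasDerivAt hH
    (hcont.intervalIntegrable 0 1)
  have hb : ∀ t ∈ Set.Icc (0:ℝ) 1, D t ≤ (L : ℝ) * ‖v‖ ^ 2 * t := by
    intro t ht
    have h1 : D t ≤ ‖gradient g (x + t • v) - gradient g x‖ * ‖v‖ := by
      calc D t = ⟪gradient g (x + t • v) - gradient g x, v⟫ := by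
            rw [hD]; rw [inner_sub_left]
        _ ≤ ‖gradient g (x + t • v) - gradient g x‖ * ‖v‖ := real_inner_le_norm _ _
    have h2 : ‖gradient g (x + t • v) - gradient g x‖ ≤ (L : ℝ) * (t * ‖v‖) := by
      have := hlip.dist_le_mul (x + t • v) x
      simp only [dist_eq_norm] at this
      calc ‖gradient g (x + t • v) - gradient g x‖ ≤ (L:ℝ) * ‖x + t • v - x‖ := this
        _ = (L : ℝ) * (|t| * ‖v‖) := by rw [add_sub_cancel_left, norm_smul]; simp
        _ = (L : ℝ) * (t * ‖v‖) := by rw [abs_of_nonneg ht.1]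
    nlinarith [norm_nonneg v, norm_nonneg (gradient g (x + t • v) - gradient g x),
      L.coe_nonneg]
  have hib : IntervalIntegrable (fun t : ℝ => (L : ℝ) * ‖v‖ ^ 2 * t) MeasureTheory.volume 0 1 :=
    (continuous_const.mul continuous_id).intervalIntegrable 0 1
  have hmono := intervalIntegral.integral_mono_on zero_le_one
    (hcont.intervalIntegrable 0 1) hib hb
  have hub : ∫ t in (0:ℝ)..1, (L : ℝ) * ‖v‖ ^ 2 * t = (L : ℝ) * ‖v‖ ^ 2 / 2 := by
    rw [intervalIntegral.integral_const_mul, integral_id]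
    ring
  rw [hint, hub] at hmono
  simp only [one_smul, zero_smul, add_zero, one_mul, zero_mul, sub_zero] at hmono
  have : x + v = y := by rw [hv]; abel
  rw [this] at hmono
  linarith

private lemma grad_min_zero' {g : E → ℝ} (hg : Differentiable ℝ g) {xs : E}
    (hmin : ∀ y, g xs ≤ g y) : gradient g xs = 0 := by
  have h : IsLocalMin g xs :=
    IsMinOn.isLocalMin (isMinOn_iff.mpr fun y _ => hmin y) Filter.univ_mem
  have := h.fderiv_eq_zero
  unfold gradient
  rw [this]
  simp

private lemma min_grad_sq' {g : E → ℝ} {L : NNReal} (hg : Differentiable ℝ g)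
    (hlip : LipschitzWith L (fun x => gradient g x)) {xs : E}
    (hmin : ∀ y, g xs ≤ g y) (x : E) :
    ‖gradient g x‖ ^ 2 ≤ 2 * (L : ℝ) * (g x - g xs) := by
  rcases eq_or_lt_of_le L.coe_nonneg with hL | hL
  · have h0 : gradient g x = gradient g xs := by
      have := hlip.dist_le_mul x xs
      rw [← hL] at this
      simpa [dist_le_zero] using this
    rw [h0, grad_min_zero' hg hmin]
    have := hmin x
    have h2 : (0:ℝ) ≤ 2 * (L:ℝ) * (g x - g xs) := by nlinarith
    simpa using h2
  · set y := x - (L : ℝ)⁻¹ • gradient g x with hy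
    have hd := descent_lemma' hg hlip x y
    have h1 : ⟪gradient g x, y - x⟫ = -(L : ℝ)⁻¹ * ‖gradient g x‖ ^ 2 := by
      rw [hy]
      simp [inner_smul_right, real_inner_self_eq_norm_sq]
    have h2 : ‖y - x‖ ^ 2 = (L : ℝ)⁻¹ ^ 2 * ‖gradient g x‖ ^ 2 := by
      rw [hy]
      simp [norm_smul]
      rw [mul_pow]
      field_simp
    have h3 := hmin y
    rw [h1, h2] at hd
    have hL' : (L : ℝ) ≠ 0 := ne_of_gt hL
    have : g xs ≤ g x - (2 * (L:ℝ))⁻¹ * ‖gradient g x‖ ^ 2 := by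
      calc g xs ≤ g y := h3
        _ ≤ g x + -(L:ℝ)⁻¹ * ‖gradient g x‖^2 + (L:ℝ)/2 * ((L:ℝ)⁻¹^2 * ‖gradient g x‖^2) := hd
        _ = g x - (2 * (L:ℝ))⁻¹ * ‖gradient g x‖ ^ 2 := by field_simp; ring
    have h4 : (2 * (L:ℝ))⁻¹ * ‖gradient g x‖ ^ 2 ≤ g x - g xs := by linarith
    calc ‖gradient g x‖ ^ 2 = 2 * (L:ℝ) * ((2 * (L:ℝ))⁻¹ * ‖gradient g x‖ ^ 2) := by
          field_simp
      _ ≤ 2 * (L:ℝ) * (g x - g xs) := by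
          apply mul_le_mul_of_nonneg_left h4 (by positivity)

private lemma bregman' {g : E → ℝ} {L : NNReal} (hconv : ConvexOn ℝ Set.univ g)
    (hg : Differentiable ℝ g) (hlip : LipschitzWith L (fun x => gradient g x)) (x y : E) :
    ‖gradient g x - gradient g y‖ ^ 2 ≤
      2 * (L : ℝ) * (g x - g y - ⟪gradient g y, x - y⟫) := by
  set c := gradient g y with hc
  set φ : E → ℝ := fun z => g z - ⟪c, z⟫ with hφ
  have hgradφ : ∀ z, HasGradientAt φ (gradient g z - c) z := by
    intro z
    rw [hasGradientAt_iff_hasFDerivAt]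
    have h1 : HasFDerivAt g (toDual ℝ E (gradient g z)) z :=
      hasGradientAt_iff_hasFDerivAt.1 (hg z).hasGradientAt
    have h2 : HasFDerivAt (fun w : E => ⟪c, w⟫) (toDual ℝ E c) z := (toDual ℝ E c).hasFDerivAt
    have := h1.sub h2
    rwa [← map_sub] at this
  have hgφ : ∀ z, gradient φ z = gradient g z - c := fun z => (hgradφ z).gradient
  have hdiffφ : Differentiable ℝ φ := fun z => ((hgradφ z).differentiableAt)
  have hconvφ : ConvexOn ℝ Set.univ φ := by
    apply hconv.add
    refine ⟨convex_univ, fun a _ b _ s t hs ht hst => le_of_eq ?_⟩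
    simp only [inner_add_right, inner_smul_right, real_inner_smul_right, smul_eq_mul]
    ring
  have hlipφ : LipschitzWith L (fun z => gradient φ z) := by
    intro a b
    simp only [hgφ]
    have := hlip a b
    simpa [edist_sub_right] using this
  have hminφ : ∀ z, φ y ≤ φ z := by
    intro z
    have := convex_lb' hconvφ hdiffφ y z
    rw [hgφ y] at this
    simpa [hc] using this
  have := min_grad_sq' hdiffφ hlipφ hminφ x
  rw [hgφ x] at this
  have heq : φ x - φ y = g x - g y - ⟪c, x - y⟫ := by
    simp only [hφ, inner_sub_right]
    ring
  rw [heq] at this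
  exact this

private lemma young_sq' (u v : E) : ‖u - v‖ ^ 2 ≤ 2 * ‖u‖ ^ 2 + 2 * ‖v‖ ^ 2 := by
  have h1 := norm_sub_sq_real u v
  have h2 := abs_real_inner_le_norm u v
  have h3 := abs_le.1 h2
  nlinarith [sq_nonneg (‖u‖ - ‖v‖)]

private lemma variance_le' {m : ℕ} (hm : 0 < m) (a : Fin m → E) :
    ∑ l, ‖a l - (m : ℝ)⁻¹ • ∑ k, a k‖ ^ 2 ≤ ∑ l, ‖a l‖ ^ 2 := by
  set b := (m : ℝ)⁻¹ • ∑ k, a k with hb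
  have hmne : (m : ℝ) ≠ 0 := Nat.cast_ne_zero.2 hm.ne'
  have hsum : ∑ k, a k = (m : ℝ) • b := by rw [hb, smul_smul, mul_inv_cancel₀ hmne, one_smul]
  have expand : ∑ l, ‖a l - b‖ ^ 2 = (∑ l, ‖a l‖ ^ 2) - (m : ℝ) * ‖b‖ ^ 2 := by
    rw [Finset.sum_congr rfl (fun l _ => norm_sub_sq_real (a l) b)]
    rw [Finset.sum_add_distrib, Finset.sum_sub_distrib, ← Finset.mul_sum, ← sum_inner, hsum,
      real_inner_smul_left, real_inner_self_eq_norm_sq, Finset.sum_const, card_univ,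
      Fintype.card_fin, nsmul_eq_mul]
    ring
  rw [expand]
  have : (0:ℝ) ≤ (m : ℝ) * ‖b‖ ^ 2 := by positivity
  linarith

private lemma grad_scaled_sum' {ι : Type*} [Fintype ι] (g : ι → E → ℝ) (c : ℝ)
    (hdiff : ∀ i, Differentiable ℝ (g i)) (z : E) :
    HasGradientAt (fun w => c * ∑ i, g i w) (c • ∑ i, gradient (g i) z) z := by
  rw [hasGradientAt_iff_hasFDerivAt]
  have h1 : HasFDerivAt (fun w => ∑ i, g i w) (∑ i, toDual ℝ E (gradient (g i) z)) z :=
    HasFDerivAt.fun_sum (fun i _ => hasGradientAt_iff_hasFDerivAt.1 ((hdiff i z).hasGradientAt))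
  have h2 := h1.const_mul c
  rw [map_smul, map_sum]
  exact h2

end Helpers

section Main

local notation "⟪" x ", " y "⟫" => @inner ℝ _ _ x y

/-- (Second moment of the averaged L-SVRG estimator.) -/
theorem stmt16 (d n m : ℕ) (hn : 0 < n) (hm : 0 < m)
    (f : Fin n → Fin m → EuclideanSpace ℝ (Fin d) → ℝ)
    (L' : Fin n → Fin m → NNReal)
    (hconv : ∀ i l, ConvexOn ℝ Set.univ (f i l))
    (hdiff : ∀ i l, Differentiable ℝ (f i l))
    (hlip : ∀ i l, LipschitzWith (L' i l) (fun x => gradient (f i l) x))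
    (fi : Fin n → EuclideanSpace ℝ (Fin d) → ℝ)
    (hfi : ∀ i x, fi i x = (m : ℝ)⁻¹ * ∑ l, f i l x)
    (F : EuclideanSpace ℝ (Fin d) → ℝ)
    (hF : ∀ x, F x = (n : ℝ)⁻¹ * ∑ i, fi i x)
    (𝓛 : ℝ) (h𝓛 : 𝓛 = 4 * (univ.sup fun i => univ.sup fun l => L' i l : NNReal))
    (L : NNReal) (hLipF : LipschitzWith L (fun x => gradient F x))
    (xs : EuclideanSpace ℝ (Fin d)) (hmin : ∀ y, F xs ≤ F y) :
    ∀ (x : EuclideanSpace ℝ (Fin d)) (w : Fin n → EuclideanSpace ℝ (Fin d)),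
      ‖gradient F x‖ ^ 2 +
        (1 / (n : ℝ) ^ 2) * ∑ i, (m : ℝ)⁻¹ * ∑ l,
          ‖(gradient (f i l) x - gradient (f i l) (w i)) -
            (gradient (fi i) x - gradient (fi i) (w i))‖ ^ 2 ≤
      (2 * L + 𝓛 / n) * (F x - F xs) +
        (2 / n) * ((1 / (m * n : ℝ)) * ∑ i, ∑ l,
          ‖gradient (f i l) (w i) - gradient (f i l) xs‖ ^ 2) := by
  intro x w
  have hmne : (m : ℝ) ≠ 0 := Nat.cast_ne_zero.2 hm.ne'
  have hnne : (n : ℝ) ≠ 0 := Nat.cast_ne_zero.2 hn.ne'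
  have hmpos : (0:ℝ) < m := Nat.cast_pos.2 hm
  have hnpos : (0:ℝ) < n := Nat.cast_pos.2 hn
  -- gradients of fi and F
  have hfieq : ∀ i, fi i = fun z => (m : ℝ)⁻¹ * ∑ l, f i l z := fun i => funext (hfi i)
  have hgfi : ∀ i z, HasGradientAt (fi i) ((m : ℝ)⁻¹ • ∑ l, gradient (f i l) z) z := by
    intro i z
    rw [hfieq i]
    exact grad_scaled_sum' _ _ (fun l => hdiff i l) z
  have hgradfi : ∀ i z, gradient (fi i) z = (m : ℝ)⁻¹ • ∑ l, gradient (f i l) z :=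
    fun i z => (hgfi i z).gradient
  have hdifffi : ∀ i, Differentiable ℝ (fi i) := fun i z => (hgfi i z).differentiableAt
  have hFeq : F = fun z => (n : ℝ)⁻¹ * ∑ i, fi i z := funext hF
  have hgF : ∀ z, HasGradientAt F ((n : ℝ)⁻¹ • ∑ i, gradient (fi i) z) z := by
    intro z
    rw [hFeq]
    exact grad_scaled_sum' _ _ hdifffi z
  have hgradF : ∀ z, gradient F z = (n : ℝ)⁻¹ • ∑ i, gradient (fi i) z :=
    fun z => (hgF z).gradient
  have hdiffF : Differentiable ℝ F := fun z => (hgF z).differentiableAt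
  -- vanishing gradient at the minimizer
  have hgradF0 : gradient F xs = 0 := grad_min_zero' hdiffF hmin
  have hsumgrad0 : ∑ i, ∑ l, gradient (f i l) xs = 0 := by
    have h0 : ((n : ℝ)⁻¹ * (m : ℝ)⁻¹) • ∑ i, ∑ l, gradient (f i l) xs = 0 := by
      have heq : gradient F xs
          = ((n : ℝ)⁻¹ * (m : ℝ)⁻¹) • ∑ i, ∑ l, gradient (f i l) xs := by
        rw [hgradF xs, Finset.sum_congr rfl fun i _ => hgradfi i xs, ← Finset.smul_sum,
          smul_smul]
      rw [← heq, hgradF0]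
    have hne : ((n : ℝ)⁻¹ * (m : ℝ)⁻¹) ≠ 0 := by positivity
    exact (smul_eq_zero.1 h0).resolve_left hne
  have hinner0 : ∑ i, ∑ l, ⟪gradient (f i l) xs, x - xs⟫ = 0 := by
    have heq : ∑ i, ∑ l, ⟪gradient (f i l) xs, x - xs⟫
        = ⟪∑ i, ∑ l, gradient (f i l) xs, x - xs⟫ := by
      rw [sum_inner]
      exact Finset.sum_congr rfl fun i _ => (sum_inner _ _ _).symm
    rw [heq, hsumgrad0, inner_zero_left]
  -- sums of function values
  have hsumf : ∀ i z, ∑ l, f i l z = m * fi i z := by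
    intro i z; rw [hfi i z]; field_simp
  have hsumfi : ∀ z, ∑ i, fi i z = n * F z := by
    intro z; rw [hF z]; field_simp
  have hsumff : ∀ z, ∑ i, ∑ l, f i l z = m * n * F z := by
    intro z
    rw [Finset.sum_congr rfl fun i _ => hsumf i z, ← Finset.mul_sum, hsumfi]
    ring
  -- sum of Bregman divergences
  have hsumB : ∑ i, ∑ l, (f i l x - f i l xs - ⟪gradient (f i l) xs, x - xs⟫)
      = m * n * (F x - F xs) := by
    simp only [Finset.sum_sub_distrib]
    rw [hsumff x, hsumff xs, hinner0]
    ring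
  have h𝓛nn : (0:ℝ) ≤ 𝓛 := by rw [h𝓛]; positivity
  have hbreg : ∀ i l, ‖gradient (f i l) x - gradient (f i l) xs‖ ^ 2 ≤
      𝓛 / 2 * (f i l x - f i l xs - ⟪gradient (f i l) xs, x - xs⟫) := by
    intro i l
    have h1 := bregman' (hconv i l) (hdiff i l) (hlip i l) x xs
    have hB : (0:ℝ) ≤ f i l x - f i l xs - ⟪gradient (f i l) xs, x - xs⟫ := by
      have := convex_lb' (hconv i l) (hdiff i l) xs x
      linarith
    have hLle : 2 * (L' i l : ℝ) ≤ 𝓛 / 2 := by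
      have h2 : L' i l ≤ (univ.sup fun i => univ.sup fun l => L' i l) :=
        le_trans (Finset.le_sup (f := fun l => L' i l) (mem_univ l))
          (Finset.le_sup (f := fun i => univ.sup fun l => L' i l) (mem_univ i))
      have h3 := NNReal.coe_le_coe.2 h2
      rw [h𝓛]
      push_cast at h3 ⊢
      linarith
    nlinarith [mul_nonneg (sub_nonneg.2 hLle) hB]
  set S1 := ∑ i, ∑ l, ‖gradient (f i l) x - gradient (f i l) xs‖ ^ 2 with hS1def
  set S2 := ∑ i, ∑ l, ‖gradient (f i l) (w i) - gradient (f i l) xs‖ ^ 2 with hS2def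
  have hS1 : S1 ≤ 𝓛 / 2 * (m * n * (F x - F xs)) := by
    calc S1 ≤ ∑ i, ∑ l, 𝓛 / 2 * (f i l x - f i l xs - ⟪gradient (f i l) xs, x - xs⟫) :=
          Finset.sum_le_sum fun i _ => Finset.sum_le_sum fun l _ => hbreg i l
      _ = 𝓛 / 2 * ∑ i, ∑ l, (f i l x - f i l xs - ⟪gradient (f i l) xs, x - xs⟫) := by
          simp_rw [← Finset.mul_sum]
      _ = 𝓛 / 2 * (m * n * (F x - F xs)) := by rw [hsumB]
  have hS2nn : (0:ℝ) ≤ S2 := by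
    rw [hS2def]
    exact Finset.sum_nonneg fun i _ => Finset.sum_nonneg fun l _ => sq_nonneg _
  -- variance bound for each i
  have hVar : ∀ i, ∑ l, ‖(gradient (f i l) x - gradient (f i l) (w i)) -
      (gradient (fi i) x - gradient (fi i) (w i))‖ ^ 2 ≤
      ∑ l, (2 * ‖gradient (f i l) x - gradient (f i l) xs‖ ^ 2 +
        2 * ‖gradient (f i l) (w i) - gradient (f i l) xs‖ ^ 2) := by
    intro i
    have hmean : gradient (fi i) x - gradient (fi i) (w i)
        = (m : ℝ)⁻¹ • ∑ l, (gradient (f i l) x - gradient (f i l) (w i)) := by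
      rw [hgradfi i x, hgradfi i (w i), ← smul_sub, Finset.sum_sub_distrib]
    calc ∑ l, ‖(gradient (f i l) x - gradient (f i l) (w i)) -
          (gradient (fi i) x - gradient (fi i) (w i))‖ ^ 2
        ≤ ∑ l, ‖gradient (f i l) x - gradient (f i l) (w i)‖ ^ 2 := by
          rw [hmean]
          exact variance_le' hm _
      _ ≤ _ := by
          apply Finset.sum_le_sum
          intro l _
          have hrw : gradient (f i l) x - gradient (f i l) (w i)
              = (gradient (f i l) x - gradient (f i l) xs) -
                (gradient (f i l) (w i) - gradient (f i l) xs) := by abel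
          rw [hrw]
          exact young_sq' _ _
  have hVtot : ∑ i, (m : ℝ)⁻¹ * ∑ l, ‖(gradient (f i l) x - gradient (f i l) (w i)) -
      (gradient (fi i) x - gradient (fi i) (w i))‖ ^ 2
      ≤ (m : ℝ)⁻¹ * (2 * S1 + 2 * S2) := by
    calc ∑ i, (m : ℝ)⁻¹ * ∑ l, ‖(gradient (f i l) x - gradient (f i l) (w i)) -
          (gradient (fi i) x - gradient (fi i) (w i))‖ ^ 2
        ≤ ∑ i, (m : ℝ)⁻¹ * ∑ l, (2 * ‖gradient (f i l) x - gradient (f i l) xs‖ ^ 2 +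
            2 * ‖gradient (f i l) (w i) - gradient (f i l) xs‖ ^ 2) := by
          apply Finset.sum_le_sum
          intro i _
          exact mul_le_mul_of_nonneg_left (hVar i) (by positivity)
      _ = (m : ℝ)⁻¹ * (2 * S1 + 2 * S2) := by
          rw [← Finset.mul_sum]
          congr 1
          rw [hS1def, hS2def]
          simp only [Finset.sum_add_distrib, Finset.mul_sum]
  have hG : ‖gradient F x‖ ^ 2 ≤ 2 * (L : ℝ) * (F x - F xs) :=
    min_grad_sq' hdiffF hLipF hmin x
  have step1 : (1 / (n : ℝ) ^ 2) * (∑ i, (m : ℝ)⁻¹ * ∑ l,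
      ‖(gradient (f i l) x - gradient (f i l) (w i)) -
        (gradient (fi i) x - gradient (fi i) (w i))‖ ^ 2)
      ≤ (1 / (n : ℝ) ^ 2) * ((m : ℝ)⁻¹ * (2 * S1 + 2 * S2)) :=
    mul_le_mul_of_nonneg_left hVtot (by positivity)
  have h1 : (1 / (n : ℝ) ^ 2) * ((m : ℝ)⁻¹ * (2 * S1)) ≤ 𝓛 / n * (F x - F xs) := by
    calc (1 / (n : ℝ) ^ 2) * ((m : ℝ)⁻¹ * (2 * S1))
        ≤ (1 / (n : ℝ) ^ 2) * ((m : ℝ)⁻¹ * (2 * (𝓛 / 2 * (m * n * (F x - F xs))))) := by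
          gcongr
      _ = 𝓛 / n * (F x - F xs) := by field_simp
  have h2 : (1 / (n : ℝ) ^ 2) * ((m : ℝ)⁻¹ * (2 * S2)) = (2 / n) * ((1 / (m * n : ℝ)) * S2) := by
    field_simp
  have expand : (2 * (L : ℝ) + 𝓛 / n) * (F x - F xs)
      = 2 * (L : ℝ) * (F x - F xs) + 𝓛 / n * (F x - F xs) := by ring
  rw [expand]
  have split : (1 / (n : ℝ) ^ 2) * ((m : ℝ)⁻¹ * (2 * S1 + 2 * S2))
      = (1 / (n : ℝ) ^ 2) * ((m : ℝ)⁻¹ * (2 * S1)) +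
        (1 / (n : ℝ) ^ 2) * ((m : ℝ)⁻¹ * (2 * S2)) := by ring
  linarith [step1, h1, h2, hG, split.le, split.ge]

end Main
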